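/- The matrix R̂ satisfies the braid (quantum Yang–Baxter) equation: (R̂ ⊗ I₂)(I₂ ⊗ R̂)(R̂ ⊗ I₂) = (I₂ ⊗ R̂)(R̂ ⊗ I₂)(I₂ ⊗ R̂) as 8×8 matrices. -/
import Mathlib


/-- The R-matrix as a matrix indexed by pairs `(i,j)` with `i, j : Fin 2`. -/
noncomputable def Rhat2 (h h' : ℂ) : Matrix (Fin 2 × Fin 2) (Fin 2 × Fin 2) ℂ :=
  fun p q =>
    (!![1, -h, h, h * h'; 0, 0, 1, h'; 0, 1, 0, -h'; 0, 0, 0, 1] :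
      Matrix (Fin 4) (Fin 4) ℂ) (finProdFinEquiv p) (finProdFinEquiv q)

/-- `R̂ ⊗ I₂` as an 8×8 matrix indexed by `Fin 2 × Fin 2 × Fin 2`. -/
noncomputable def RhatI (h h' : ℂ) :
    Matrix (Fin 2 × Fin 2 × Fin 2) (Fin 2 × Fin 2 × Fin 2) ℂ :=
  fun p q => Rhat2 h h' (p.1, p.2.1) (q.1, q.2.1) * (if p.2.2 = q.2.2 then 1 else 0)

/-- `I₂ ⊗ R̂` as an 8×8 matrix indexed by `Fin 2 × Fin 2 × Fin 2`. -/
noncomputable def IRhat (h h' : ℂ) :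
    Matrix (Fin 2 × Fin 2 × Fin 2) (Fin 2 × Fin 2 × Fin 2) ℂ :=
  fun p q => (if p.1 = q.1 then 1 else 0) * Rhat2 h h' p.2 q.2

@[simp] lemma R0000 (h h' : ℂ) : Rhat2 h h' (0,0) (0,0) = 1 := by norm_num [Rhat2, finProdFinEquiv, Matrix.vecHead, Matrix.vecTail]
@[simp] lemma R0001 (h h' : ℂ) : Rhat2 h h' (0,0) (0,1) = -h := by norm_num [Rhat2, finProdFinEquiv, Matrix.vecHead, Matrix.vecTail]
@[simp] lemma R0010 (h h' : ℂ) : Rhat2 h h' (0,0) (1,0) = h := by norm_num [Rhat2, finProdFinEquiv, Matrix.vecHead, Matrix.vecTail]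
@[simp] lemma R0011 (h h' : ℂ) : Rhat2 h h' (0,0) (1,1) = h*h' := by norm_num [Rhat2, finProdFinEquiv, Matrix.vecHead, Matrix.vecTail]
@[simp] lemma R0100 (h h' : ℂ) : Rhat2 h h' (0,1) (0,0) = 0 := by norm_num [Rhat2, finProdFinEquiv, Matrix.vecHead, Matrix.vecTail]
@[simp] lemma R0101 (h h' : ℂ) : Rhat2 h h' (0,1) (0,1) = 0 := by norm_num [Rhat2, finProdFinEquiv, Matrix.vecHead, Matrix.vecTail]
@[simp] lemma R0110 (h h' : ℂ) : Rhat2 h h' (0,1) (1,0) = 1 := by norm_num [Rhat2, finProdFinEquiv, Matrix.vecHead, Matrix.vecTail]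
@[simp] lemma R0111 (h h' : ℂ) : Rhat2 h h' (0,1) (1,1) = h' := by norm_num [Rhat2, finProdFinEquiv, Matrix.vecHead, Matrix.vecTail]
@[simp] lemma R1000 (h h' : ℂ) : Rhat2 h h' (1,0) (0,0) = 0 := by norm_num [Rhat2, finProdFinEquiv, Matrix.vecHead, Matrix.vecTail]
@[simp] lemma R1001 (h h' : ℂ) : Rhat2 h h' (1,0) (0,1) = 1 := by norm_num [Rhat2, finProdFinEquiv, Matrix.vecHead, Matrix.vecTail]
@[simp] lemma R1010 (h h' : ℂ) : Rhat2 h h' (1,0) (1,0) = 0 := by norm_num [Rhat2, finProdFinEquiv, Matrix.vecHead, Matrix.vecTail]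
@[simp] lemma R1011 (h h' : ℂ) : Rhat2 h h' (1,0) (1,1) = -h' := by norm_num [Rhat2, finProdFinEquiv, Matrix.vecHead, Matrix.vecTail]
@[simp] lemma R1100 (h h' : ℂ) : Rhat2 h h' (1,1) (0,0) = 0 := by norm_num [Rhat2, finProdFinEquiv, Matrix.vecHead, Matrix.vecTail]
@[simp] lemma R1101 (h h' : ℂ) : Rhat2 h h' (1,1) (0,1) = 0 := by norm_num [Rhat2, finProdFinEquiv, Matrix.vecHead, Matrix.vecTail]
@[simp] lemma R1110 (h h' : ℂ) : Rhat2 h h' (1,1) (1,0) = 0 := by norm_num [Rhat2, finProdFinEquiv, Matrix.vecHead, Matrix.vecTail]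
@[simp] lemma R1111 (h h' : ℂ) : Rhat2 h h' (1,1) (1,1) = 1 := by norm_num [Rhat2, finProdFinEquiv, Matrix.vecHead, Matrix.vecTail]

lemma fin10 : ((1:Fin 2) = 0) = False := by decide
lemma fin01 : ((0:Fin 2) = 1) = False := by decide

set_option maxHeartbeats 4000000 in
theorem rhat_yang_baxter (h h' : ℂ) :
    RhatI h h' * IRhat h h' * RhatI h h' = IRhat h h' * RhatI h h' * IRhat h h' := by
  ext ⟨a, b, c⟩ ⟨d, e, f⟩
  simp only [Matrix.mul_apply, RhatI, IRhat, Fintype.sum_prod_type, Fin.sum_univ_two]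
  fin_cases a <;> fin_cases b <;> fin_cases c <;> fin_cases d <;> fin_cases e <;> fin_cases f <;>
    · simp only [Fin.mk_zero, Fin.mk_one, Fin.isValue, fin10, fin01, R0000, R0001, R0010, R0011, R0100, R0101,
        R0110, R0111, R1000, R1001, R1010, R1011, R1100, R1101, R1110, R1111, mul_one, one_mul,
        mul_zero, zero_mul, add_zero, zero_add, if_true, if_false, reduceIte, neg_mul, mul_neg,
        neg_neg, neg_zero]
      try ring
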